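/- Suppose x_1, ..., x_m ∈ F_q((t^ℚ)) each have support contained in (0, 1] ∩ T_c for the same nonnegative integer c and are each algebraic over F_q((t)). If x_1, ..., x_m are linearly dependent over F_q((t)), then they are linearly dependent over F_q. -/

import Mathlib

/-- A deterministic finite automaton with output (DFAO): transition function,
initial state, and output function. -/
structure DFAO (α Q Δ : Type*) where
  step : Q → α → Q
  start : Q
  out : Q → Δ

/-- The output of a DFAO on an input string. -/
def DFAO.eval {α Q Δ : Type*} (M : DFAO α Q Δ) (s : List α) : Δ :=
  M.out (s.foldl M.step M.start)

/-- A language is regular if it is accepted by a DFA with finitely many states. -/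
def IsRegularLang {α : Type*} (L : Set (List α)) : Prop :=
  ∃ (n : ℕ) (M : DFA α (Fin n)), M.accepts = L

/-- The value of a list of base-`b` digits, most significant digit first. -/
def digitsVal (b : ℕ) (l : List ℕ) : ℕ := l.foldl (fun acc d => acc * b + d) 0

/-- A valid preradix digit string: digits less than `b`, no leading zero. -/
def ValidPre (b : ℕ) (pre : List ℕ) : Prop :=
  (∀ d ∈ pre, d < b) ∧ pre.head? ≠ some 0

/-- A valid postradix digit string: digits less than `b`, no trailing zero. -/
def ValidPost (b : ℕ) (post : List ℕ) : Prop :=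
  (∀ d ∈ post, d < b) ∧ post.getLast? ≠ some 0

/-- The string over the alphabet `Σ_b = Option ℕ` (digits `some d`, radix point `none`)
whose preradix digits are `pre` and postradix digits are `post`. -/
def expString (pre post : List ℕ) : List (Option ℕ) :=
  pre.map some ++ none :: post.map some

/-- The value of the base-`b` expansion with preradix digits `pre` and postradix
digits `post`. -/
def expValue (b : ℕ) (pre post : List ℕ) : ℚ :=
  (digitsVal b pre : ℚ) + (digitsVal b post : ℚ) / (b : ℚ) ^ post.length

/-- `S_b`: the set of nonnegative `b`-adic rationals. -/
def Sb (b : ℕ) : Set ℚ := {x : ℚ | ∃ m n : ℕ, x = (m : ℚ) / (b : ℚ) ^ n}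

/-- A function `f` (restricted to `S_b`) is `b`-automatic if some DFAO with finitely
many states, fed the valid base-`b` expansion of `v ∈ S_b`, outputs `f v`. -/
def IsBAutomatic (b : ℕ) {Δ : Type*} (f : ℚ → Δ) : Prop :=
  ∃ (n : ℕ) (M : DFAO (Option ℕ) (Fin n) Δ),
    ∀ pre post : List ℕ, ValidPre b pre → ValidPost b post →
      M.eval (expString pre post) = f (expValue b pre post)

/-- A subset `S ⊆ S_b` is `b`-regular if the language of valid base-`b` expansions of
its elements is regular. -/
def IsBRegular (b : ℕ) (S : Set ℚ) : Prop :=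
  IsRegularLang {s : List (Option ℕ) | ∃ pre post : List ℕ,
    ValidPre b pre ∧ ValidPost b post ∧ s = expString pre post ∧ expValue b pre post ∈ S}

/-- The element `t` of the Hahn series field `F((t^ℚ))`. -/
noncomputable def tHahn (F : Type*) [Field F] : HahnSeries ℚ F := HahnSeries.single (1 : ℚ) 1

/-- The natural ring homomorphism `F[t] → F((t^ℚ))`. -/
noncomputable def polyToHahn (F : Type*) [Field F] : Polynomial F →+* HahnSeries ℚ F :=
  (Polynomial.aeval (tHahn F)).toRingHom

/-- `x ∈ F((t^ℚ))` is algebraic over the rational function field `F(t)`; equivalently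
(clearing denominators), `x` is a root of a nonzero polynomial with coefficients
in `F[t]`. -/
def AlgebraicOverRatFunc (F : Type*) [Field F] (x : HahnSeries ℚ F) : Prop :=
  ∃ P : Polynomial (Polynomial F), P ≠ 0 ∧ Polynomial.eval₂ (polyToHahn F) x P = 0

/-- The natural embedding `F((t)) → F((t^ℚ))` of Laurent series into generalized
Laurent series. -/
noncomputable def laurentToHahn (F : Type*) [Field F] : LaurentSeries F →+* HahnSeries ℚ F :=
  HahnSeries.embDomainRingHom (Int.castAddHom ℚ) Int.cast_injective
    (fun _ _ => Int.cast_le)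

/-- `x ∈ F((t^ℚ))` is algebraic over the Laurent series field `F((t))`. -/
def AlgebraicOverLaurent (F : Type*) [Field F] (x : HahnSeries ℚ F) : Prop :=
  ∃ P : Polynomial (LaurentSeries F), P ≠ 0 ∧ Polynomial.eval₂ (laurentToHahn F) x P = 0

/-- A generalized Laurent series `x = Σ_i x_i t^i` is `p`-quasi-automatic if for some
integers `a > 0` and `b`, the set `aS + b` (where `S` is the support of `x`) consists of
nonnegative `p`-adic rationals, and the function `i ↦ x_{(i-b)/a}` is `p`-automatic. -/
def IsPQuasiAutomatic (p : ℕ) {F : Type*} [Field F] (x : HahnSeries ℚ F) : Prop :=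
  ∃ a b : ℤ, 0 < a ∧ (∀ i ∈ x.support, (a : ℚ) * i + (b : ℚ) ∈ Sb p) ∧
    IsBAutomatic p (fun j : ℚ => x.coeff ((j - (b : ℚ)) / (a : ℚ)))

/-- A generalized Laurent series is `p`-automatic if its support consists of nonnegative
`p`-adic rationals and its coefficient function is `p`-automatic. -/
def IsPAutomatic (p : ℕ) {F : Type*} [Field F] (x : HahnSeries ℚ F) : Prop :=
  x.support ⊆ Sb p ∧ IsBAutomatic p x.coeff

/-- The set `T_c ⊆ S_p` of rationals of the form `n - b_1 p⁻¹ - b_2 p⁻² - ⋯` with `n` a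
nonnegative integer, `b_i ∈ {0, …, p-1}`, and `Σ b_i ≤ c`. -/
def Tset (p c : ℕ) : Set ℚ :=
  {x : ℚ | ∃ (n : ℕ) (b : ℕ →₀ ℕ), (∀ i, b i < p) ∧ (b.sum fun _ v => v) ≤ c ∧
    x = (n : ℚ) - ∑ i ∈ b.support, (b i : ℚ) * (p : ℚ) ^ (-(i + 1) : ℤ)}


lemma laurentToHahn_coeff_int (F : Type*) [Field F] (f : LaurentSeries F) (M : ℤ) :
    (laurentToHahn F f).coeff (M : ℚ) = f.coeff M := by
  show (HahnSeries.embDomain _ f).coeff _ = f.coeff M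
  exact HahnSeries.embDomain_coeff

lemma laurentToHahn_coeff_notint (F : Type*) [Field F] (f : LaurentSeries F) (a : ℚ)
    (ha : a ∉ Set.range ((↑) : ℤ → ℚ)) : (laurentToHahn F f).coeff a = 0 := by
  show (HahnSeries.embDomain _ f).coeff _ = 0
  exact HahnSeries.embDomain_notin_range ha

lemma key_mul_coeff (F : Type*) [Field F] (f : LaurentSeries F) (y : HahnSeries ℚ F)
    (hy : y.support ⊆ Set.Ioc (0 : ℚ) 1) (N : ℤ) (q : ℚ) (hq : q ∈ Set.Ioc (0 : ℚ) 1) :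
    (laurentToHahn F f * y).coeff ((N : ℚ) + q) = f.coeff N * y.coeff q := by
  rw [HahnSeries.coeff_mul]
  have hsub : Finset.antidiagonal (laurentToHahn F f).isPWO_support y.isPWO_support
      ((N : ℚ) + q) ⊆ {((N : ℚ), q)} := by
    rintro ⟨a, b⟩ hab
    rw [Finset.mem_addAntidiagonal] at hab
    obtain ⟨ha, hb, habq⟩ := hab
    have hrange : a ∈ Set.range ((↑) : ℤ → ℚ) := by
      by_contra h
      exact ha (laurentToHahn_coeff_notint F f a h)
    obtain ⟨M, rfl⟩ := hrange
    have hbIoc := hy hb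
    have h1 : (-1 : ℚ) < (M : ℚ) - N := by
      have := hbIoc.2; have := hq.1; linarith
    have h2 : (M : ℚ) - N < 1 := by
      have := hbIoc.1; have := hq.2; linarith
    have hMN : M = N := by
      have h1' : (-1 : ℤ) < M - N := by exact_mod_cast (by push_cast; linarith : ((-1 : ℤ) : ℚ) < ((M - N : ℤ) : ℚ))
      have h2' : (M - N : ℤ) < 1 := by exact_mod_cast (by push_cast; linarith : (((M - N) : ℤ) : ℚ) < ((1 : ℤ) : ℚ))
      omega
    subst hMN
    have hbq : b = q := by linarith
    simp [hbq]
  rw [Finset.sum_subset hsub]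
  · rw [Finset.sum_singleton, laurentToHahn_coeff_int]
  · rintro ⟨a, b⟩ hmem hnot
    simp only [Finset.mem_singleton, Prod.mk.injEq] at hmem
    obtain ⟨rfl, rfl⟩ := hmem
    rw [Finset.mem_addAntidiagonal, not_and_or, not_and_or] at hnot
    rcases hnot with h | h | h
    · rw [HahnSeries.mem_support, not_not] at h; rw [h, zero_mul]
    · rw [HahnSeries.mem_support, not_not] at h; rw [h, mul_zero]
    · exact absurd rfl h

/-- If `x_1, …, x_m ∈ F_q((t^ℚ))` have supports in `(0,1] ∩ T_c`, are algebraic over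
`F_q((t))`, and are linearly dependent over `F_q((t))`, then they are linearly
dependent over `F_q`. -/
theorem linearly_dependent_descends (p n : ℕ) (hp : p.Prime) (hn : 0 < n)
    (F : Type*) [Field F] [Fintype F] (hcard : Fintype.card F = p ^ n) (c : ℕ)
    (m : ℕ) (x : Fin m → HahnSeries ℚ F)
    (hsupp : ∀ k, (x k).support ⊆ Set.Ioc (0 : ℚ) 1 ∩ Tset p c)
    (halg : ∀ k, AlgebraicOverLaurent F (x k))
    (hdep : ∃ cc : Fin m → LaurentSeries F, (∃ k, cc k ≠ 0) ∧
      ∑ k, laurentToHahn F (cc k) * x k = 0) :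
    ∃ d : Fin m → F, (∃ k, d k ≠ 0) ∧ ∑ k, d k • x k = 0 := by
  obtain ⟨cc, ⟨k0, hk0⟩, hsum⟩ := hdep
  have hN : ∃ N : ℤ, (cc k0).coeff N ≠ 0 := by
    by_contra h
    push_neg at h
    exact hk0 (HahnSeries.ext (funext h))
  obtain ⟨N, hN⟩ := hN
  refine ⟨fun k => (cc k).coeff N, ⟨k0, hN⟩, ?_⟩
  ext q
  have hcoeff : (∑ k, (cc k).coeff N • x k).coeff q = ∑ k, (cc k).coeff N * (x k).coeff q := by
    induction (Finset.univ : Finset (Fin m)) using Finset.induction with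
    | empty => simp
    | insert _ _ hx ih => simp [Finset.sum_insert hx, ih, HahnSeries.coeff_add]
  rw [hcoeff, HahnSeries.coeff_zero]
  by_cases hmem : q ∈ Set.Ioc (0 : ℚ) 1
  · have hz := congrArg (fun z : HahnSeries ℚ F => z.coeff ((N : ℚ) + q)) hsum
    simp only [HahnSeries.coeff_zero] at hz
    have hsumc : (∑ k, laurentToHahn F (cc k) * x k).coeff ((N : ℚ) + q)
        = ∑ k, (cc k).coeff N * (x k).coeff q := by
      induction (Finset.univ : Finset (Fin m)) using Finset.induction with
      | empty => simp
      | insert _ _ hx ih =>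
        rw [Finset.sum_insert hx, Finset.sum_insert hx, HahnSeries.coeff_add, ih,
          key_mul_coeff F (cc _) (x _) (fun i hi => (hsupp _ hi).1) N q hmem]
    rw [← hsumc, hz]
  · have hzc : ∀ k, (x k).coeff q = 0 := by
      intro k
      by_contra h
      exact hmem ((hsupp k h).1)
    simp [hzc]
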